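/- Let n = 3k+4 for k ≥ 0. The chain of subsets S_1 ⊂ S_2 ⊂ ⋯ ⊂ S_{k+1} of {1,…,n}, where S_i is the union of the first i blocks of the ordered block decomposition 1,3 | 2,4,6 | 5,7,9 | ⋯ | 3k−1, 3k+1, 3k+3 | 3k+2, 3k+4, is a maximal face of the h-complex Δ_n of dimension k. -/

import Mathlib

/-- The chain `L` of subsets of `{1,…,n}` (encoded as `Finset (Fin n)`) with the
sentinels `S₀ = ∅` and `S_{j+1} = univ` adjoined. -/
def withSent (n : ℕ) (L : List (Finset (Fin n))) : List (Finset (Fin n)) :=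
  (∅ :: L) ++ [Finset.univ]

/-- `L` is a face of the h-complex `Δₙ` of the truncated Boolean algebra: a strictly
increasing chain of proper nonempty subsets such that, with sentinels adjoined,
every consecutive pair of blocks has `max (S_i \ S_{i-1}) > min (S_{i+1} \ S_i)`
(expressed as: some element of the lower difference exceeds some element of the
upper difference, which is equivalent since max ≥ a and min ≤ c). -/
def IsFace (n : ℕ) (L : List (Finset (Fin n))) : Prop :=
  (withSent n L).Chain' (· ⊂ ·) ∧
  ∀ i, ∀ h : i + 2 < (withSent n L).length,
    ∃ a ∈ (withSent n L).get ⟨i + 1, by omega⟩ \ (withSent n L).get ⟨i, by omega⟩,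
      ∃ c ∈ (withSent n L).get ⟨i + 2, h⟩ \ (withSent n L).get ⟨i + 1, by omega⟩, c < a

namespace HAux

variable {n : ℕ}

def Cond (A B C : Finset (Fin n)) : Prop := ∃ a ∈ B \ A, ∃ c ∈ C \ B, c < a

def Tri : List (Finset (Fin n)) → Prop
  | A :: B :: C :: t => Cond A B C ∧ Tri (B :: C :: t)
  | _ => True

lemma tri_tail {A : Finset (Fin n)} {l} (h : Tri (A :: l)) : Tri l := by
  match l with
  | [] => trivial
  | [_] => trivial
  | B :: C :: t => exact h.2

lemma Cond.mono {A A' B C C' : Finset (Fin n)} (hA : A' ⊆ A) (hC : C ⊆ C')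
    (h : Cond A B C) : Cond A' B C' := by
  obtain ⟨a, ha, c, hc, hlt⟩ := h
  rw [Finset.mem_sdiff] at ha hc
  exact ⟨a, Finset.mem_sdiff.2 ⟨ha.1, fun h' => ha.2 (hA h')⟩,
    c, Finset.mem_sdiff.2 ⟨hC hc.1, hc.2⟩, hlt⟩

lemma tri_iff : ∀ (l : List (Finset (Fin n))), Tri l ↔
    ∀ i (h : i + 2 < l.length),
      Cond (l[i]'(by omega)) (l[i+1]'(by omega)) (l[i+2]'h)
  | [] => by simp [Tri]
  | [A] => by simp [Tri]
  | [A, B] => by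
      simp only [Tri, List.length, true_iff]
      intro i h; omega
  | A :: B :: C :: t => by
      show (Cond A B C ∧ Tri (B :: C :: t)) ↔ _
      rw [tri_iff (B :: C :: t)]
      constructor
      · rintro ⟨h0, h1⟩ i hi
        cases i with
        | zero => simpa using h0
        | succ j =>
            have := h1 j (by simp at hi ⊢; omega)
            simpa using this
      · intro h
        refine ⟨by simpa using h 0 (by simp), fun j hj => ?_⟩
        have := h (j+1) (by simp at hj ⊢; omega)
        simpa using this

lemma tri_remove : ∀ (A : List (Finset (Fin n))) (T : Finset (Fin n)) (B : List (Finset (Fin n))),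
    (A ++ T :: B).Chain' (· ⊆ ·) → Tri (A ++ T :: B) → Tri (A ++ B)
  | [], T, B, _, ht => tri_tail ht
  | [P], T, [], _, _ => trivial
  | [P], T, [B0], _, _ => trivial
  | [P], T, B0 :: B1 :: t, hc, ht => by
      have hPT : P ⊆ T := (List.isChain_cons_cons.mp hc).1
      exact ⟨Cond.mono hPT (subset_refl _) ht.2.1, ht.2.2⟩
  | P :: Q :: A', T, B, hc, ht => by
      have hc' := (List.isChain_cons_cons.mp hc).2
      have ih : Tri ((Q :: A') ++ B) := tri_remove (Q :: A') T B hc' (tri_tail ht)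
      cases A' with
      | cons R A'' => exact ⟨ht.1, ih⟩
      | nil =>
          cases B with
          | nil => trivial
          | cons B0 t =>
              have hTB : T ⊆ B0 := (List.isChain_cons_cons.mp (List.isChain_cons_cons.mp hc').2).1
              exact ⟨Cond.mono (subset_refl _) hTB ht.1, ih⟩

lemma isFace_iff (L : List (Finset (Fin n))) :
    IsFace n L ↔ (withSent n L).Chain' (· ⊂ ·) ∧ Tri (withSent n L) := by
  rw [IsFace, tri_iff]
  simp [Cond, List.get_eq_getElem]

lemma isFace_remove (A : List (Finset (Fin n))) (T : Finset (Fin n)) (B : List (Finset (Fin n)))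
    (h : IsFace n (A ++ T :: B)) : IsFace n (A ++ B) := by
  rw [isFace_iff] at h ⊢
  obtain ⟨hc, ht⟩ := h
  have hsub : (withSent n (A ++ B)).Sublist (withSent n (A ++ T :: B)) := by
    unfold withSent
    refine List.Sublist.append ?_ (List.Sublist.refl _)
    exact List.Sublist.cons₂ _ ((List.sublist_cons_self T B).append_left A)
  refine ⟨hc.sublist hsub, ?_⟩
  have h1 : withSent n (A ++ T :: B) = (∅ :: A) ++ T :: (B ++ [Finset.univ]) := by
    simp [withSent]
  have h2 : withSent n (A ++ B) = (∅ :: A) ++ (B ++ [Finset.univ]) := by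
    simp [withSent]
  rw [h2]
  rw [h1] at hc ht
  exact tri_remove _ _ _ (hc.imp fun _ _ h => h.subset) ht

lemma sublist_exists_remove {α : Type*} {l₁ l₂ : List α} (h : l₁.Sublist l₂)
    (hl : l₁.length < l₂.length) :
    ∃ A T B, l₂ = A ++ T :: B ∧ l₁.Sublist (A ++ B) := by
  induction h with
  | slnil => simp at hl
  | cons T h ih => exact ⟨[], T, _, rfl, h⟩
  | @cons_cons l₁ l₂ a h ih =>
      obtain ⟨A, T, B, rfl, hs⟩ := ih (by simpa using hl)
      exact ⟨a :: A, T, B, rfl, hs.cons₂ a⟩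



def Sset (k j : ℕ) : Finset (Fin (3 * k + 4)) :=
  Finset.univ.filter fun x : Fin (3 * k + 4) => (x : ℕ) ≤ 3 * j ∨ (x : ℕ) = 3 * j + 2

lemma mem_Sset {k j : ℕ} {x : Fin (3 * k + 4)} :
    x ∈ Sset k j ↔ (x : ℕ) ≤ 3 * j ∨ (x : ℕ) = 3 * j + 2 := by
  simp [Sset]

def LL (k : ℕ) : List (Finset (Fin (3 * k + 4))) := List.ofFn fun i : Fin (k + 1) => Sset k i

@[simp] lemma LL_length (k : ℕ) : (LL k).length = k + 1 := by simp [LL]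

lemma LL_get (k : ℕ) (q : ℕ) (hq : q < k + 1) : (LL k)[q]'(by simp [LL]; omega) = Sset k q := by
  simp only [LL, List.getElem_ofFn]

lemma withSent_length {n : ℕ} (L : List (Finset (Fin n))) :
    (withSent n L).length = L.length + 2 := by
  simp [withSent]

lemma getW (k : ℕ) (p : ℕ) (hp : p < k + 3) :
    (withSent (3*k+4) (LL k))[p]'(by rw [withSent_length]; simp; omega) =
      if p = 0 then ∅ else if p ≤ k + 1 then Sset k (p-1) else Finset.univ := by
  have hws : withSent (3*k+4) (LL k) = (∅ :: LL k) ++ [Finset.univ] := rfl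
  rw [List.getElem_of_eq hws]
  match p with
  | 0 => simp
  | (q+1) =>
    rcases Nat.lt_or_ge (q+1) (k+2) with h1 | h1
    · rw [List.getElem_append_left (by simp; omega)]
      rw [List.getElem_cons_succ]
      rw [LL_get k q (by omega)]
      rw [if_neg (by omega), if_pos (by omega)]
      simp
    · rw [List.getElem_append_right (by simp; omega)]
      rw [if_neg (by omega), if_neg (by omega)]
      simp

lemma Sset_subset_Sset {k a b : ℕ} (h : a ≤ b) : Sset k a ⊆ Sset k b := by
  intro x hx; rw [mem_Sset] at *; omega

lemma Sset_ssubset_Sset {k a b : ℕ} (h : a < b) (hb : b ≤ k) : Sset k a ⊂ Sset k b := by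
  rw [Finset.ssubset_iff_of_subset (Sset_subset_Sset (le_of_lt h))]
  refine ⟨⟨3*b, by omega⟩, ?_, ?_⟩
  · rw [mem_Sset]; left; rfl
  · rw [mem_Sset]; push_neg; constructor <;> simp <;> omega

lemma Sset_ssubset_univ {k j : ℕ} (hj : j ≤ k) : Sset k j ⊂ Finset.univ := by
  rw [Finset.ssubset_iff_of_subset (Finset.subset_univ _)]
  refine ⟨⟨3*j+1, by omega⟩, Finset.mem_univ _, ?_⟩
  rw [mem_Sset]; push_neg; constructor <;> simp <;> omega

lemma chainW (k : ℕ) : (withSent (3*k+4) (LL k)).Chain' (· ⊂ ·) := by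
  refine List.isChain_iff_getElem.mpr ?_
  intro p hp
  rw [withSent_length, LL_length] at hp
  rw [getW k p (by omega), getW k (p+1) (by omega)]
  rcases Nat.eq_zero_or_pos p with rfl | hp0
  · rw [if_pos rfl, if_neg (by omega), if_pos (by omega)]
    rw [Finset.empty_ssubset]
    exact ⟨⟨0, by omega⟩, by rw [mem_Sset]; simp⟩
  · rw [if_neg (by omega)]
    rcases Nat.lt_or_ge p (k+1) with h1 | h1
    · rw [if_pos (by omega), if_neg (by omega), if_pos (by omega)]
      exact Sset_ssubset_Sset (by omega) (by omega)
    · rw [if_pos (by omega), if_neg (by omega), if_neg (by omega)]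
      exact Sset_ssubset_univ (by omega)

lemma faceLL (k : ℕ) : IsFace (3*k+4) (LL k) := by
  refine ⟨chainW k, ?_⟩
  intro i h
  rw [withSent_length, LL_length] at h
  simp only [List.get_eq_getElem]
  rw [getW k i (by omega), getW k (i+1) (by omega), getW k (i+2) (by omega)]
  rw [if_neg (by omega), if_pos (by omega)]
  have hik : i ≤ k := by omega
  refine ⟨⟨3*i+2, by omega⟩, ?_, ⟨3*i+1, by omega⟩, ?_, ?_⟩
  · rw [Finset.mem_sdiff]
    constructor
    · rw [mem_Sset]; simp
    · rcases Nat.eq_zero_or_pos i with rfl | hi0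
      · rw [if_pos rfl]; exact Finset.notMem_empty _
      · rw [if_neg (by omega), if_pos (by omega)]
        rw [mem_Sset]; push_neg; constructor <;> simp <;> omega
  · rw [Finset.mem_sdiff]
    constructor
    · rcases Nat.lt_or_ge (i+2) (k+2) with h1 | h1
      · rw [if_neg (by omega), if_pos (by omega)]
        rw [mem_Sset]; simp
      · rw [if_neg (by omega), if_neg (by omega)]
        exact Finset.mem_univ _
    · rw [mem_Sset]; push_neg; constructor <;> simp <;> omega
  · rw [Fin.lt_def]; simp

lemma getElem_congr_idx {α : Type*} (l : List α) {a b : ℕ} (h : a = b) {ha : a < l.length} :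
    l[a] = l[b]'(h ▸ ha) := by subst h; rfl

def Vf (k i : ℕ) (T : Finset (Fin (3*k+4))) (p : ℕ) : Finset (Fin (3*k+4)) :=
  if p = 0 then ∅ else if p ≤ i then Sset k (p-1)
  else if p = i+1 then T else if p ≤ k+2 then Sset k (p-2) else Finset.univ

lemma no_insert (k : ℕ) (A : List (Finset (Fin (3*k+4)))) (T : Finset (Fin (3*k+4)))
    (B : List (Finset (Fin (3*k+4)))) (hAB : A ++ B = LL k) :
    ¬ IsFace (3*k+4) (A ++ T :: B) := by
  intro hface
  obtain ⟨i, hidef⟩ : ∃ i, A.length = i := ⟨_, rfl⟩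
  have hlenAB : i + B.length = k + 1 := by
    have := congrArg List.length hAB
    simp at this; omega
  have hik : i ≤ k + 1 := by omega
  have hA : ∀ q (hq : q < i), A[q]'(by omega) = Sset k q := by
    intro q hq
    have h1 : (A ++ B)[q]'(by simp; omega) = A[q]'(by omega) :=
      List.getElem_append_left (by omega)
    have h2 := List.getElem_of_eq hAB (show q < (A ++ B).length by simp; omega)
    rw [h1] at h2
    rw [h2, LL_get k q (by omega)]
  have hB : ∀ q (hq : q < B.length), B[q]'(by omega) = Sset k (i + q) := by
    intro q hq
    have h1 : (A ++ B)[i + q]'(by simp; omega) = B[q]'(by omega) := by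
      rw [List.getElem_append_right (by omega)]
      exact getElem_congr_idx B (by omega)
    have h2 := List.getElem_of_eq hAB (show i + q < (A ++ B).length by simp; omega)
    rw [h1] at h2
    rw [h2, LL_get k (i+q) (by omega)]
  have hlenW : (withSent (3*k+4) (A ++ T :: B)).length = k + 4 := by
    rw [withSent_length]; simp; omega
  have getW' : ∀ (p : ℕ) (hp : p < k + 4),
      (withSent (3*k+4) (A ++ T :: B))[p]'(by omega) = Vf k i T p := by
    intro p hp
    have hws : withSent (3*k+4) (A ++ T :: B) = (∅ :: A) ++ (T :: (B ++ [Finset.univ])) := by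
      simp [withSent]
    rw [List.getElem_of_eq hws]
    unfold Vf
    rcases Nat.lt_or_ge p (i+1) with h1 | h1
    · rw [List.getElem_append_left (by simp; omega)]
      match p, h1 with
      | 0, _ => simp
      | (q+1), h1 =>
        rw [List.getElem_cons_succ, hA q (by omega)]
        rw [if_neg (by omega), if_pos (by omega)]
        congr 1 <;> omega
    · rw [List.getElem_append_right (by simp; omega)]
      rw [getElem_congr_idx _ (show p - (∅ :: A).length = p - (i+1) by simp; omega)]
      rcases Nat.eq_or_lt_of_le h1 with h2 | h2
      · rw [getElem_congr_idx _ (show p - (i+1) = 0 by omega)]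
        rw [if_neg (by omega), if_neg (by omega), if_pos (by omega)]
        rfl
      · rw [getElem_congr_idx _ (show p - (i+1) = (p - i - 2) + 1 by omega),
            List.getElem_cons_succ]
        rcases Nat.lt_or_ge p (k+3) with h3 | h3
        · rw [List.getElem_append_left (by omega), hB (p - i - 2) (by omega)]
          rw [if_neg (by omega), if_neg (by omega), if_neg (by omega), if_pos (by omega)]
          congr 1 <;> omega
        · rw [List.getElem_append_right (show B.length ≤ p - i - 2 by omega)]
          rw [if_neg (by omega), if_neg (by omega), if_neg (by omega), if_neg (by omega)]
          simp
  have hC : ∀ p, p + 2 < k + 4 →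
      ∃ a ∈ Vf k i T (p+1) \ Vf k i T p, ∃ c ∈ Vf k i T (p+2) \ Vf k i T (p+1), c < a := by
    intro p hp
    have h := hface.2 p (by omega)
    simp only [List.get_eq_getElem] at h
    rw [getW' p (by omega), getW' (p+1) (by omega), getW' (p+2) (by omega)] at h
    exact h
  have hsub : ∀ p, p + 1 < k + 4 → Vf k i T p ⊆ Vf k i T (p+1) := by
    intro p hp
    have h := List.isChain_iff_getElem.mp hface.1 p (by omega)
    rw [getW' p (by omega), getW' (p+1) (by omega)] at h
    exact h.subset
  clear getW' hface hA hB hAB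
  rcases Nat.eq_zero_or_pos i with rfl | hipos
  · -- i = 0 : T inserted before S₁
    have v1 : Vf k 0 T 1 = T := by
      unfold Vf; rw [if_neg (by omega), if_neg (by omega), if_pos (by omega)]
    have v2 : Vf k 0 T 2 = Sset k 0 := by
      unfold Vf
      rw [if_neg (by omega), if_neg (by omega), if_neg (by omega), if_pos (by omega)]
    obtain ⟨a, ha, c, hc, hlt⟩ := hC 0 (by omega)
    obtain ⟨a', ha', c', hc', hlt'⟩ := hC 1 (by omega)
    have hTsub : T ⊆ Sset k 0 := by
      have := hsub 1 (by omega); rwa [v1, v2] at this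
    simp only [v1, v2, Finset.mem_sdiff] at ha hc ha' hc'
    rw [Fin.lt_def] at hlt hlt'
    have f1 : (a:ℕ) ≤ 3*0 ∨ (a:ℕ) = 3*0+2 := mem_Sset.mp (hTsub ha.1)
    have f2 : (a':ℕ) ≤ 3*0 ∨ (a':ℕ) = 3*0+2 := mem_Sset.mp ha'.1
    have f3 : ¬((c':ℕ) ≤ 3*0 ∨ (c':ℕ) = 3*0+2) := fun h => hc'.2 (mem_Sset.mpr h)
    rcases f2 with h2 | h2
    · omega
    · rcases f1 with h1 | h1
      · omega
      · exact ha'.2 (Fin.ext (h1.trans h2.symm) ▸ ha.1)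
  rcases Nat.lt_or_ge i (k+1) with hilt | hige
  · -- 1 ≤ i ≤ k : T inserted between S_i and S_{i+1}
    obtain ⟨j, rfl⟩ : ∃ j, i = j + 1 := ⟨i - 1, by omega⟩
    have vj1 : Vf k (j+1) T (j+1) = Sset k j := by
      unfold Vf; rw [if_neg (by omega), if_pos (by omega)]; congr 1 <;> omega
    have vj2 : Vf k (j+1) T (j+2) = T := by
      unfold Vf; rw [if_neg (by omega), if_neg (by omega), if_pos (by omega)]
    have vj3 : Vf k (j+1) T (j+3) = Sset k (j+1) := by
      unfold Vf
      rw [if_neg (by omega), if_neg (by omega), if_neg (by omega), if_pos (by omega)]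
      congr 1 <;> omega
    obtain ⟨a₁, ha₁, c₁, hc₁, hlt₁⟩ := hC j (by omega)
    obtain ⟨a₂, ha₂, c₂, hc₂, hlt₂⟩ := hC (j+1) (by omega)
    obtain ⟨a₃, ha₃, c₃, hc₃, hlt₃⟩ := hC (j+2) (by omega)
    have hsub1 : Sset k j ⊆ T := by
      have := hsub (j+1) (by omega); rwa [vj1, vj2] at this
    have hsub2 : T ⊆ Sset k (j+1) := by
      have := hsub (j+2) (by omega); rwa [vj2, vj3] at this
    simp only [vj1, vj2, vj3, Finset.mem_sdiff] at ha₁ hc₁ ha₂ hc₂ ha₃ hc₃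
    rw [Fin.lt_def] at hlt₁ hlt₂ hlt₃
    have F1 : (a₁:ℕ) ≤ 3*j ∨ (a₁:ℕ) = 3*j+2 := mem_Sset.mp ha₁.1
    have F2 : ¬((c₁:ℕ) ≤ 3*j ∨ (c₁:ℕ) = 3*j+2) := fun h => hc₁.2 (mem_Sset.mpr h)
    have F4 : (a₃:ℕ) ≤ 3*(j+1) ∨ (a₃:ℕ) = 3*(j+1)+2 := mem_Sset.mp ha₃.1
    have F5 : ¬((c₃:ℕ) ≤ 3*(j+1) ∨ (c₃:ℕ) = 3*(j+1)+2) := fun h => hc₃.2 (mem_Sset.mpr h)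
    have F7 : (a₂:ℕ) ≤ 3*(j+1) ∨ (a₂:ℕ) = 3*(j+1)+2 := mem_Sset.mp (hsub2 ha₂.1)
    have F8 : ¬((c₂:ℕ) ≤ 3*j ∨ (c₂:ℕ) = 3*j+2) := fun h => hc₂.2 (hsub1 (mem_Sset.mpr h))
    have hc₁v : (c₁:ℕ) = 3*j+1 := by omega
    have ha₃v : (a₃:ℕ) = 3*j+5 := by omega
    have ha₂v : (a₂:ℕ) ≤ 3*j+3 := by
      rcases F7 with h | h
      · omega
      · exact absurd (Fin.ext (show (a₂:ℕ) = (a₃:ℕ) by omega) ▸ ha₂.1) ha₃.2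
    have hc₂v : (c₂:ℕ) = 3*j+1 := by omega
    exact hc₂.2 (Fin.ext (show (c₂:ℕ) = (c₁:ℕ) by omega) ▸ hc₁.1)
  · -- i = k+1 : T inserted after S_{k+1}
    obtain rfl : i = k + 1 := by omega
    have w1 : Vf k (k+1) T (k+1) = Sset k k := by
      unfold Vf; rw [if_neg (by omega), if_pos (by omega)]; congr 1 <;> omega
    have w2 : Vf k (k+1) T (k+2) = T := by
      unfold Vf; rw [if_neg (by omega), if_neg (by omega), if_pos (by omega)]
    have w3 : Vf k (k+1) T (k+3) = Finset.univ := by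
      unfold Vf
      rw [if_neg (by omega), if_neg (by omega), if_neg (by omega), if_neg (by omega)]
    obtain ⟨a₁, ha₁, c₁, hc₁, hlt₁⟩ := hC k (by omega)
    obtain ⟨a₂, ha₂, c₂, hc₂, hlt₂⟩ := hC (k+1) (by omega)
    have hsub1 : Sset k k ⊆ T := by
      have := hsub (k+1) (by omega); rwa [w1, w2] at this
    simp only [w1, w2, w3, Finset.mem_sdiff] at ha₁ hc₁ ha₂ hc₂
    rw [Fin.lt_def] at hlt₁ hlt₂
    have F1 : (a₁:ℕ) ≤ 3*k ∨ (a₁:ℕ) = 3*k+2 := mem_Sset.mp ha₁.1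
    have F2 : ¬((c₁:ℕ) ≤ 3*k ∨ (c₁:ℕ) = 3*k+2) := fun h => hc₁.2 (mem_Sset.mpr h)
    have F3 : ¬((c₂:ℕ) ≤ 3*k ∨ (c₂:ℕ) = 3*k+2) := fun h => hc₂.2 (hsub1 (mem_Sset.mpr h))
    have hc₁v : (c₁:ℕ) = 3*k+1 := by omega
    have hc₂v : (c₂:ℕ) = 3*k+1 ∨ (c₂:ℕ) = 3*k+3 := by
      have := c₂.isLt; omega
    rcases hc₂v with h | h
    · exact hc₂.2 (Fin.ext (show (c₂:ℕ) = (c₁:ℕ) by omega) ▸ hc₁.1)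
    · have := a₂.isLt; omega

end HAux

/-- for `n = 3k+4`, the chain `S₁ ⊂ ⋯ ⊂ S_{k+1}` of partial unions
of the blocks `1,3 | 2,4,6 | 5,7,9 | ⋯ | 3k-1,3k+1,3k+3 | 3k+2,3k+4` is a
maximal face of `Δₙ` of dimension `k`.  Here `Sᵢ = {1,…,3i-2} ∪ {3i}`, which in
the 0-indexed `Fin n` encoding of `{1,…,n}` (value `x` standing for the number
`x+1`, index `i : Fin (k+1)` for the 1-indexed block `i+1`) reads
`x ≤ 3i ∨ x = 3i+2`. -/
theorem maximal_face_n_eq_3k4 (k : ℕ) (L : List (Finset (Fin (3 * k + 4))))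
    (hL : L = List.ofFn fun i : Fin (k + 1) =>
      Finset.univ.filter fun x : Fin (3 * k + 4) =>
        (x : ℕ) ≤ 3 * (i : ℕ) ∨ (x : ℕ) = 3 * (i : ℕ) + 2) :
    IsFace (3 * k + 4) L ∧ L.length = k + 1 ∧
      ∀ L', IsFace (3 * k + 4) L' → L.Sublist L' → L' = L := by
  have hLL : L = HAux.LL k := by rw [hL]; rfl
  subst hLL
  refine ⟨HAux.faceLL k, HAux.LL_length k, ?_⟩
  intro L' hface hsub
  have key : ∀ m (M : List (Finset (Fin (3*k+4)))), M.length ≤ m →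
      IsFace (3*k+4) M → (HAux.LL k).Sublist M → M = HAux.LL k := by
    intro m
    induction m with
    | zero =>
        intro M hm hf hs
        have := hs.length_le
        rw [HAux.LL_length] at this
        omega
    | succ m ih =>
        intro M hm hf hs
        rcases Nat.lt_or_ge (HAux.LL k).length M.length with hlt | hge
        · obtain ⟨A, T, B, rfl, hs'⟩ := HAux.sublist_exists_remove hs hlt
          have hf' := HAux.isFace_remove A T B hf
          have hAB := ih (A ++ B) (by simp at hm ⊢; omega) hf' hs'
          exact absurd hf (HAux.no_insert k A T B hAB)
        · exact (hs.eq_of_length (le_antisymm hs.length_le hge)).symm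
  exact key L'.length L' le_rfl hface hsub
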